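/- Let f : ℝⁿ → ℝ be a C² function whose gradient is ρ-Lipschitz, i.e., ‖∇f(x) − ∇f(y)‖ ≤ ρ‖x − y‖ for all x, y, and let 0 < α < 1/ρ. Let θ* be a strict saddle of f, i.e., the Hessian of f at θ* has a negative eigenvalue (there exists a nonzero vector v with ⟨Hess f(θ*) v, v⟩ < 0). Then the set of initial points θ₀ ∈ ℝⁿ for which the gradient descent iterates θ_{k+1} = θ_k − α∇f(θ_k) converge to θ* has Lebesgue measure zero. -/

import Mathlib

open MeasureTheory Filter Metric Set Module
open scoped NNReal ENNReal

lemma vol_zero {n : ℕ} {s : Set (EuclideanSpace ℝ (Fin n))}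
    (h : dimH s < (finrank ℝ (EuclideanSpace ℝ (Fin n)) : ℝ≥0∞)) : volume s = 0 := by
  set k := finrank ℝ (EuclideanSpace ℝ (Fin n)) with hk
  have e : ((k : ℝ≥0) : ℝ) = (k : ℝ) := by norm_cast
  have h1 : (volume : Measure (EuclideanSpace ℝ (Fin n))) ≪ μH[((k : ℝ≥0) : ℝ)] := by
    rw [e]
    exact MeasureTheory.Measure.absolutelyContinuous_isAddHaarMeasure _ _
  exact measure_zero_of_dimH_lt h1 (by exact_mod_cast h)


lemma contDiff_grad {n : ℕ} {f : EuclideanSpace ℝ (Fin n) → ℝ} (hf : ContDiff ℝ 2 f) :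
    ContDiff ℝ 1 (gradient f) := by
  have h1 : ContDiff ℝ 1 (fderiv ℝ f) := hf.fderiv_right (by norm_num)
  exact (InnerProductSpace.toDual ℝ _).symm.toContinuousLinearEquiv.contDiff.comp h1

set_option maxHeartbeats 2000000 in
lemma stable_null {n : ℕ} (f : EuclideanSpace ℝ (Fin n) → ℝ)
    (hf : ContDiff ℝ 2 f) (ρ : ℝ) (hρ : 0 < ρ)
    (hlip : ∀ x y, ‖gradient f x - gradient f y‖ ≤ ρ * ‖x - y‖)
    (α : ℝ) (hα₀ : 0 < α) (hα₁ : α < 1 / ρ)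
    (θs : EuclideanSpace ℝ (Fin n))
    (hsym : ∀ u w, inner (𝕜 := ℝ) (fderiv ℝ (gradient f) θs u) w
      = inner (𝕜 := ℝ) u (fderiv ℝ (gradient f) θs w))
    (hsaddle : ∃ v : EuclideanSpace ℝ (Fin n), v ≠ 0 ∧
      inner (𝕜 := ℝ) (fderiv ℝ (gradient f) θs v) v < 0) :
    ∃ δ : ℝ, 0 < δ ∧
      volume {x : EuclideanSpace ℝ (Fin n) |
        ∀ k, (fun θ => θ - α • gradient f θ)^[k] x ∈ closedBall θs δ} = 0 := by
  set G := gradient f with hG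
  set g : EuclideanSpace ℝ (Fin n) → EuclideanSpace ℝ (Fin n) := fun θ => θ - α • G θ with hg
  set H : EuclideanSpace ℝ (Fin n) →L[ℝ] EuclideanSpace ℝ (Fin n) := fderiv ℝ G θs with hH
  have hαρ : α * ρ < 1 := by rw [lt_div_iff₀ hρ] at hα₁; linarith
  -- gradient is Lipschitz
  have hlipG : LipschitzWith ρ.toNNReal G := by
    apply LipschitzWith.of_dist_le_mul
    intro x y
    rw [dist_eq_norm, dist_eq_norm, Real.coe_toNNReal ρ hρ.le]
    exact hlip x y
  have hHnorm : ‖H‖ ≤ ρ := by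
    have := norm_fderiv_le_of_lipschitz ℝ hlipG (x₀ := θs)
    rwa [Real.coe_toNNReal ρ hρ.le] at this
  -- spectral theory
  have hT : (H : EuclideanSpace ℝ (Fin n) →ₗ[ℝ] EuclideanSpace ℝ (Fin n)).IsSymmetric :=
    fun u w => hsym u w
  have hn : finrank ℝ (EuclideanSpace ℝ (Fin n)) = n := finrank_euclideanSpace_fin
  set b := hT.eigenvectorBasis hn with hb
  set μ := hT.eigenvalues hn with hμdef
  have hdiag : ∀ (x : EuclideanSpace ℝ (Fin n)) i, b.repr (H x) i = μ i * b.repr x i := fun x i =>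
    hT.eigenvectorBasis_apply_self_apply hn x i
  -- basic coordinate facts
  have normsq : ∀ u : EuclideanSpace ℝ (Fin n), ‖u‖^2 = ∑ i, (b.repr u i)^2 := by
    intro u
    have h1 : ‖b.repr u‖ ^ 2 = ∑ i, ‖b.repr u i‖ ^ 2 := by
      rw [EuclideanSpace.norm_eq, Real.sq_sqrt (by positivity)]
    rw [← b.repr.norm_map u, h1]
    simp [Real.norm_eq_abs, sq_abs]
  have innersum : ∀ u v : EuclideanSpace ℝ (Fin n),
      inner (𝕜 := ℝ) u v = ∑ i, b.repr u i * b.repr v i := by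
    intro u v
    rw [← b.repr.inner_map_map u v]
    simp only [PiLp.inner_apply, RCLike.inner_apply, conj_trivial]
    exact Finset.sum_congr rfl fun i _ => mul_comm _ _
  -- eigenvalue bounds
  have hμ_bound : ∀ i, |μ i| ≤ ρ := by
    intro i
    have h1 : ‖b i‖ = 1 := b.orthonormal.1 i
    have h2 : H (b i) = μ i • b i := hT.apply_eigenvectorBasis hn i
    have : |μ i| = ‖H (b i)‖ := by
      rw [h2, norm_smul, h1, Real.norm_eq_abs, mul_one]
    rw [this]
    calc ‖H (b i)‖ ≤ ‖H‖ * ‖b i‖ := H.le_opNorm _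
      _ ≤ ρ := by rw [h1, mul_one]; exact hHnorm
  -- negative eigenvalue exists
  obtain ⟨v, hv0, hvneg⟩ := hsaddle
  have hexneg : ∃ i, μ i < 0 := by
    by_contra hc
    push_neg at hc
    have hsum : inner (𝕜 := ℝ) (H v) v = ∑ i, μ i * (b.repr v i)^2 := by
      rw [innersum]
      exact Finset.sum_congr rfl fun i _ => by rw [hdiag]; ring
    have : (0:ℝ) ≤ ∑ i, μ i * (b.repr v i)^2 :=
      Finset.sum_nonneg fun i _ => mul_nonneg (hc i) (sq_nonneg _)
    rw [← hsum] at this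
    exact absurd hvneg (not_lt.mpr this)
  obtain ⟨i₀, hi₀⟩ := hexneg
  -- constants
  set m : ℝ := Finset.univ.inf' ⟨i₀, Finset.mem_univ i₀⟩ μ with hm
  have hm_le : ∀ i, m ≤ μ i := fun i => Finset.inf'_le μ (Finset.mem_univ i)
  have hm_neg : m < 0 := lt_of_le_of_lt (hm_le i₀) hi₀
  set μ₀ : ℝ := 1 - α * m with hμ₀def
  have hμ₀ : 1 < μ₀ := by nlinarith
  set Iu : Finset (Fin n) := Finset.univ.filter (fun i => μ i = m) with hIu
  have hIu_ne : Iu.Nonempty := by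
    obtain ⟨i, hi, hieq⟩ := Finset.exists_mem_eq_inf' ⟨i₀, Finset.mem_univ i₀⟩ μ
    exact ⟨i, Finset.mem_filter.mpr ⟨Finset.mem_univ i, hieq.symm⟩⟩
  set Is : Finset (Fin n) := Iuᶜ with hIs
  set ν : ℝ := if h : Is.Nonempty then Is.sup' h (fun i => |1 - α * μ i|) else 0 with hν
  have hν_bound : ∀ i ∈ Is, |1 - α * μ i| ≤ ν := by
    intro i hi
    rw [hν, dif_pos ⟨i, hi⟩]
    exact Finset.le_sup' (fun i => |1 - α * μ i|) hi
  have hν_lt : ν < μ₀ := by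
    rw [hν]
    split_ifs with h
    · refine (Finset.sup'_lt_iff h).mpr ?_
      intro i hi
      have h1 : μ i ≠ m := by
        intro he
        have : i ∈ Iu := Finset.mem_filter.mpr ⟨Finset.mem_univ i, he⟩
        rw [hIs] at hi
        exact (Finset.mem_compl.mp hi) this
      have h2 : m < μ i := lt_of_le_of_ne (hm_le i) (Ne.symm h1)
      have h3 : μ i ≤ ρ := le_of_abs_le (hμ_bound i)
      rw [abs_lt]
      constructor <;> nlinarith
    · linarith
  have hν0 : 0 ≤ ν := by
    rw [hν]
    split_ifs with h
    · obtain ⟨i, hi⟩ := h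
      exact le_trans (abs_nonneg (1 - α * μ i)) (Finset.le_sup' (fun i => |1 - α * μ i|) hi)
    · exact le_refl 0
  -- epsilon and beta
  set ε : ℝ := min ((μ₀ - ν)/4) ((μ₀ - 1)/4) with hε
  have hε_pos : 0 < ε := lt_min (by linarith) (by linarith)
  have hβ1 : 1 < μ₀ - 2 * ε := by
    have : ε ≤ (μ₀ - 1)/4 := min_le_right _ _
    linarith
  set β : ℝ := μ₀ - 2 * ε with hβ
  have hcoef : ν + 2 * ε ≤ μ₀ - 2 * ε := by
    have : ε ≤ (μ₀ - ν)/4 := min_le_left _ _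
    linarith
  -- Taylor estimate radius
  have hGd : Differentiable ℝ G := (contDiff_grad hf).differentiable one_ne_zero
  have hc : ContinuousAt (fderiv ℝ G) θs :=
    ((contDiff_grad hf).continuous_fderiv one_ne_zero).continuousAt
  have hεα : 0 < ε / α := div_pos hε_pos hα₀
  obtain ⟨δ', hδ'pos, hδ'⟩ := Metric.continuousAt_iff.mp hc (ε / α) hεα
  set δ : ℝ := δ' / 2 with hδdef
  have hδpos : 0 < δ := by positivity
  have hball : ∀ z ∈ closedBall θs δ, ‖fderiv ℝ G z - H‖ ≤ ε / α := by
    intro z hz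
    have h1 : dist z θs < δ' := lt_of_le_of_lt (mem_closedBall.mp hz) (by rw [hδdef]; linarith)
    have h2 := hδ' h1
    rw [dist_eq_norm] at h2
    exact h2.le
  have hTaylor : ∀ x ∈ closedBall θs δ, ∀ y ∈ closedBall θs δ,
      ‖G y - G x - H (y - x)‖ ≤ ε / α * ‖y - x‖ := by
    intro x hx y hy
    exact (convex_closedBall θs δ).norm_image_sub_le_of_norm_fderiv_le'
      (fun z _ => hGd z) hball hx hy
  -- projections onto unstable/stable coordinate spaces
  set Pm : EuclideanSpace ℝ (Fin n) → EuclideanSpace ℝ (Fin n) :=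
    fun w => b.repr.symm (WithLp.toLp 2 (fun i => if i ∈ Iu then b.repr w i else 0) :
      EuclideanSpace ℝ (Fin n)) with hPmdef
  set Qm : EuclideanSpace ℝ (Fin n) → EuclideanSpace ℝ (Fin n) := fun w => w - Pm w with hQmdef
  have hPrepr : ∀ w i, b.repr (Pm w) i = if i ∈ Iu then b.repr w i else 0 := by
    intro w i
    show (b.repr (b.repr.symm _)) i = _
    rw [b.repr.apply_symm_apply]
  have repr_smul : ∀ (c : ℝ) (u : EuclideanSpace ℝ (Fin n)) i,
      b.repr (c • u) i = c * b.repr u i := by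
    intro c u i; rw [_root_.map_smul]; rfl
  have repr_sub : ∀ (u v : EuclideanSpace ℝ (Fin n)) i,
      b.repr (u - v) i = b.repr u i - b.repr v i := by
    intro u v i; rw [map_sub]; rfl
  have repr_add : ∀ (u v : EuclideanSpace ℝ (Fin n)) i,
      b.repr (u + v) i = b.repr u i + b.repr v i := by
    intro u v i; rw [map_add]; rfl
  have repr_ext : ∀ {u v : EuclideanSpace ℝ (Fin n)},
      (∀ i, b.repr u i = b.repr v i) → u = v := by
    intro u v h
    apply b.repr.injective
    ext i
    exact h i
  have hQrepr : ∀ w i, b.repr (Qm w) i = if i ∈ Iu then 0 else b.repr w i := by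
    intro w i
    show b.repr (w - Pm w) i = _
    rw [repr_sub w (Pm w) i, hPrepr w i]
    split_ifs <;> ring
  have hPadd : ∀ u v, Pm (u + v) = Pm u + Pm v := by
    intro u v
    apply repr_ext; intro i
    rw [hPrepr (u+v) i, repr_add u v i, repr_add (Pm u) (Pm v) i, hPrepr u i, hPrepr v i]
    split_ifs <;> ring
  have hQadd : ∀ u v, Qm (u + v) = Qm u + Qm v := by
    intro u v
    apply repr_ext; intro i
    rw [hQrepr (u+v) i, repr_add u v i, repr_add (Qm u) (Qm v) i, hQrepr u i, hQrepr v i]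
    split_ifs <;> ring
  have hPQ : ∀ w, Pm w + Qm w = w := by
    intro w
    show Pm w + (w - Pm w) = w
    abel
  have h_orth : ∀ w, ‖Pm w‖^2 + ‖Qm w‖^2 = ‖w‖^2 := by
    intro w
    rw [normsq, normsq, normsq, ← Finset.sum_add_distrib]
    apply Finset.sum_congr rfl
    intro i _
    rw [hPrepr w i, hQrepr w i]
    split_ifs <;> ring
  have hPle : ∀ w, ‖Pm w‖ ≤ ‖w‖ := by
    intro w
    have := h_orth w
    nlinarith [norm_nonneg (Pm w), norm_nonneg w, sq_nonneg ‖Qm w‖]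
  have hQle : ∀ w, ‖Qm w‖ ≤ ‖w‖ := by
    intro w
    have := h_orth w
    nlinarith [norm_nonneg (Qm w), norm_nonneg w, sq_nonneg ‖Pm w‖]
  have htri : ∀ w : EuclideanSpace ℝ (Fin n), ‖w‖ ≤ ‖Pm w‖ + ‖Qm w‖ := by
    intro w
    calc ‖w‖ = ‖Pm w + Qm w‖ := by rw [hPQ]
    _ ≤ _ := norm_add_le _ _
  -- the linearization A
  set A : EuclideanSpace ℝ (Fin n) → EuclideanSpace ℝ (Fin n) := fun w => w - α • H w with hA
  have hArepr : ∀ w i, b.repr (A w) i = (1 - α * μ i) * b.repr w i := by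
    intro w i
    show b.repr (w - α • H w) i = _
    rw [repr_sub w (α • H w) i, repr_smul α (H w) i, hdiag w i]; ring
  have hPA : ∀ w, Pm (A w) = μ₀ • Pm w := by
    intro w; apply repr_ext; intro i
    rw [hPrepr (A w) i, repr_smul μ₀ (Pm w) i, hPrepr w i, hArepr w i]
    by_cases hi : i ∈ Iu
    · rw [if_pos hi, if_pos hi]
      have hmi : μ i = m := (Finset.mem_filter.mp hi).2
      rw [hmi, hμ₀def]
    · rw [if_neg hi, if_neg hi, mul_zero]
  have hQA : ∀ w, Qm (A w) = A (Qm w) := by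
    intro w; apply repr_ext; intro i
    rw [hQrepr (A w) i, hArepr w i, hArepr (Qm w) i, hQrepr w i]
    split_ifs <;> ring
  have le_of_sq : ∀ a c : ℝ, 0 ≤ a → 0 ≤ c → a^2 ≤ c^2 → a ≤ c := by
    intro a c ha hc h; nlinarith
  have hAQ_norm : ∀ w, ‖A (Qm w)‖ ≤ ν * ‖Qm w‖ := by
    intro w
    apply le_of_sq _ _ (norm_nonneg _) (by positivity)
    rw [mul_pow, normsq, normsq, Finset.mul_sum]
    apply Finset.sum_le_sum
    intro i _
    rw [hArepr (Qm w) i]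
    by_cases hi : i ∈ Iu
    · rw [hQrepr w i, if_pos hi]
      simp
    · have h1 : |1 - α * μ i| ≤ ν := hν_bound i (Finset.mem_compl.mpr hi)
      calc ((1 - α*μ i) * b.repr (Qm w) i)^2 = (1-α*μ i)^2 * (b.repr (Qm w) i)^2 := by ring
      _ ≤ ν^2 * (b.repr (Qm w) i)^2 := by
          apply mul_le_mul_of_nonneg_right _ (sq_nonneg _)
          calc (1-α*μ i)^2 = |1-α*μ i|^2 := (sq_abs _).symm
          _ ≤ ν^2 := by nlinarith [abs_nonneg (1 - α*μ i)]
  -- relation between g and A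
  have hgA : ∀ x y, g x - g y = A (x - y) + (-α) • (G x - G y - H (x - y)) := by
    intro x y
    show (x - α • G x) - (y - α • G y)
      = ((x - y) - α • H (x - y)) + (-α) • (G x - G y - H (x - y))
    module
  set S : Set (EuclideanSpace ℝ (Fin n)) := {x | ∀ k, g^[k] x ∈ closedBall θs δ} with hSdef
  -- one-step cone invariance and expansion
  have hstep : ∀ x' ∈ closedBall θs δ, ∀ y' ∈ closedBall θs δ,
      ‖Qm (x' - y')‖ ≤ ‖Pm (x' - y')‖ →
      ‖Qm (g x' - g y')‖ ≤ ‖Pm (g x' - g y')‖ ∧ β * ‖Pm (x' - y')‖ ≤ ‖Pm (g x' - g y')‖ := by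
    intro x' hx' y' hy' hcone
    have hwr : g x' - g y' = A (x' - y') + (-α) • (G x' - G y' - H (x' - y')) := hgA x' y'
    set w : EuclideanSpace ℝ (Fin n) := x' - y' with hwdef
    set r : EuclideanSpace ℝ (Fin n) := (-α) • (G x' - G y' - H (x' - y')) with hrdef
    have hrle : ‖r‖ ≤ ε * ‖w‖ := by
      rw [hrdef, norm_smul]
      have ht := hTaylor y' hy' x' hx'
      have h1 : ‖(-α : ℝ)‖ = α := by rw [Real.norm_eq_abs, abs_neg, abs_of_pos hα₀]
      rw [h1]
      calc α * ‖G x' - G y' - H (x' - y')‖ ≤ α * (ε / α * ‖x' - y'‖) := by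
            apply mul_le_mul_of_nonneg_left ht hα₀.le
      _ = ε * ‖w‖ := by field_simp; rfl
    have hw2P : ‖w‖ ≤ 2 * ‖Pm w‖ := by
      have := htri w; linarith
    have hPw' : Pm (g x' - g y') = μ₀ • Pm w + Pm r := by
      rw [hwr, hPadd, hPA]
    have hP_lower : β * ‖Pm w‖ ≤ ‖Pm (g x' - g y')‖ := by
      rw [hPw']
      have h1 : ‖μ₀ • Pm w‖ ≤ ‖μ₀ • Pm w + Pm r‖ + ‖Pm r‖ := norm_le_add_norm_add _ _
      have h2 : ‖μ₀ • Pm w‖ = μ₀ * ‖Pm w‖ := by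
        rw [norm_smul, Real.norm_eq_abs, abs_of_pos (by linarith)]
      have h3 : ‖Pm r‖ ≤ ε * (2 * ‖Pm w‖) := by
        refine le_trans (hPle r) (le_trans hrle ?_)
        nlinarith [hε_pos]
      rw [h2] at h1
      rw [hβ]
      linarith
    have hQw' : Qm (g x' - g y') = A (Qm w) + Qm r := by
      rw [hwr, hQadd, hQA]
    have hQP : ‖Qm (g x' - g y')‖ ≤ ‖Pm (g x' - g y')‖ := by
      have h4 : ‖Qm (g x' - g y')‖ ≤ ν * ‖Qm w‖ + ε * ‖w‖ := by
        rw [hQw']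
        calc ‖A (Qm w) + Qm r‖ ≤ ‖A (Qm w)‖ + ‖Qm r‖ := norm_add_le _ _
        _ ≤ ν * ‖Qm w‖ + ε * ‖w‖ :=
          add_le_add (hAQ_norm w) (le_trans (hQle r) hrle)
      have h5 : ν * ‖Qm w‖ + ε * ‖w‖ ≤ (ν + 2*ε) * ‖Pm w‖ := by
        nlinarith [hν0, hε_pos, hcone, hw2P, norm_nonneg (Pm w), norm_nonneg w]
      have h6 : (ν + 2*ε) * ‖Pm w‖ ≤ β * ‖Pm w‖ := by
        apply mul_le_mul_of_nonneg_right _ (norm_nonneg _)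
        rw [hβ]; exact hcoef
      linarith
    exact ⟨hQP, hP_lower⟩
  -- iterated expansion
  have hiter : ∀ x ∈ S, ∀ y ∈ S, ‖Qm (x - y)‖ ≤ ‖Pm (x - y)‖ → ∀ k,
      ‖Qm (g^[k] x - g^[k] y)‖ ≤ ‖Pm (g^[k] x - g^[k] y)‖ ∧
      β^k * ‖Pm (x - y)‖ ≤ ‖Pm (g^[k] x - g^[k] y)‖ := by
    intro x hx y hy hcone k
    induction k with
    | zero =>
      refine ⟨by simpa using hcone, ?_⟩
      simp
    | succ k ih =>
      obtain ⟨ih1, ih2⟩ := ih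
      have hst := hstep _ (hx k) _ (hy k) ih1
      rw [Function.iterate_succ_apply' g k x, Function.iterate_succ_apply' g k y]
      refine ⟨hst.1, ?_⟩
      have hβpos : (0:ℝ) < β := by linarith
      calc β^(k+1) * ‖Pm (x-y)‖ = β * (β^k * ‖Pm (x-y)‖) := by ring
      _ ≤ β * ‖Pm (g^[k] x - g^[k] y)‖ := by nlinarith
      _ ≤ ‖Pm (g (g^[k] x) - g (g^[k] y))‖ := hst.2
  -- injectivity on the cone
  have hinj : ∀ x ∈ S, ∀ y ∈ S, ‖Qm (x - y)‖ ≤ ‖Pm (x - y)‖ → x = y := by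
    intro x hx y hy hcone
    have hP0 : ‖Pm (x - y)‖ ≤ 0 := by
      by_contra hpos
      push_neg at hpos
      obtain ⟨k, hk⟩ := pow_unbounded_of_one_lt ((2*δ) / ‖Pm (x-y)‖) hβ1
      have h1 := (hiter x hx y hy hcone k).2
      have h2 : ‖Pm (g^[k] x - g^[k] y)‖ ≤ 2*δ := by
        refine le_trans (hPle _) ?_
        have hd := dist_triangle (g^[k] x) θs (g^[k] y)
        have hxk := mem_closedBall.mp (hx k)
        have hyk := mem_closedBall.mp (hy k)
        rw [dist_comm θs (g^[k] y)] at hd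
        rw [← dist_eq_norm]
        linarith
      have h3 : 2*δ < β ^ k * ‖Pm (x-y)‖ := by
        have := (div_lt_iff₀ hpos).mp hk
        linarith
      linarith
    have hP0' : Pm (x - y) = 0 := norm_le_zero_iff.mp hP0
    have hQ0 : Qm (x - y) = 0 := by
      apply norm_le_zero_iff.mp
      rw [hP0', norm_zero] at hcone
      exact hcone
    have hxy : x - y = 0 := by
      apply norm_le_zero_iff.mp
      have := htri (x - y)
      rw [hP0', hQ0, norm_zero] at this
      linarith
    exact sub_eq_zero.mp hxy
  have hQsub : ∀ u v, Qm (u - v) = Qm u - Qm v := by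
    intro u v
    apply repr_ext; intro i
    rw [hQrepr (u-v) i, repr_sub u v i, repr_sub (Qm u) (Qm v) i, hQrepr u i, hQrepr v i]
    split_ifs <;> ring
  have hsep : ∀ x ∈ S, ∀ y ∈ S, ‖x - y‖ ≤ 2 * ‖Qm x - Qm y‖ := by
    intro x hx y hy
    by_cases hxy : x = y
    · rw [hxy]; simp
    · have hnc : ¬ (‖Qm (x - y)‖ ≤ ‖Pm (x - y)‖) := fun hc => hxy (hinj x hx y hy hc)
      push_neg at hnc
      rw [← hQsub x y]
      have := htri (x - y)
      linarith
  -- S is contained in a Lipschitz image of a lower-dimensional subspace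
  obtain ⟨i₁, hi₁⟩ := hIu_ne
  have hu₁norm : ‖b i₁‖ = 1 := b.orthonormal.1 i₁
  have hu₁0 : b i₁ ≠ 0 := by
    intro h; rw [h, norm_zero] at hu₁norm; norm_num at hu₁norm
  set W := (ℝ ∙ (b i₁))ᗮ with hWdef
  have hQW : ∀ w, Qm w ∈ W := by
    intro w
    rw [hWdef, Submodule.mem_orthogonal_singleton_iff_inner_right]
    have h1 : inner (𝕜 := ℝ) (b i₁) (Qm w) = b.repr (Qm w) i₁ :=
      (b.repr_apply_apply (Qm w) i₁).symm
    rw [h1, hQrepr w i₁, if_pos hi₁]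
  set F := Function.invFunOn Qm S with hFdef
  have hFmem : ∀ t ∈ Qm '' S, F t ∈ S := by
    intro t ht
    obtain ⟨x, hx, hxt⟩ := ht
    exact Function.invFunOn_mem ⟨x, hx, hxt⟩
  have hFeq : ∀ t ∈ Qm '' S, Qm (F t) = t := by
    intro t ht
    obtain ⟨x, hx, hxt⟩ := ht
    exact Function.invFunOn_eq ⟨x, hx, hxt⟩
  have hFlip : LipschitzOnWith 2 F (Qm '' S) := by
    apply LipschitzOnWith.of_dist_le_mul
    intro t1 h1 t2 h2
    rw [dist_eq_norm, dist_eq_norm]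
    have hs := hsep (F t1) (hFmem _ h1) (F t2) (hFmem _ h2)
    rw [hFeq _ h1, hFeq _ h2] at hs
    have : ((2:ℝ≥0) : ℝ) = 2 := by norm_num
    rw [this]
    exact hs
  have hSsub : S ⊆ F '' (Qm '' S) := by
    intro x hx
    have h1 : Qm x ∈ Qm '' S := mem_image_of_mem _ hx
    have h4 : F (Qm x) = x := by
      have hs := hsep (F (Qm x)) (hFmem _ h1) x hx
      rw [hFeq _ h1, sub_self, norm_zero, mul_zero] at hs
      exact sub_eq_zero.mp (norm_le_zero_iff.mp hs)
    exact ⟨Qm x, h1, h4⟩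
  -- dimension count
  have hn1 : 1 ≤ n := by
    have : (i₁ : ℕ) < n := i₁.isLt
    omega
  haveI hfact : Fact (finrank ℝ (EuclideanSpace ℝ (Fin n)) = (n - 1) + 1) :=
    ⟨by rw [hn]; omega⟩
  have hWrank : finrank ℝ W = n - 1 := by
    rw [hWdef]
    exact Submodule.finrank_orthogonal_span_singleton hu₁0
  have hWdim : dimH (W : Set (EuclideanSpace ℝ (Fin n))) ≤ (n - 1 : ℕ) := by
    have hrange : (W : Set (EuclideanSpace ℝ (Fin n))) = Set.range W.subtypeL := by
      ext z
      constructor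
      · intro hz; exact ⟨⟨z, hz⟩, rfl⟩
      · rintro ⟨⟨z', hz'⟩, rfl⟩; exact hz'
    rw [hrange, ← hWrank]
    exact (W.subtypeL.contDiff).dimH_range_le
  have hSdim : dimH S ≤ (n - 1 : ℕ) := by
    calc dimH S ≤ dimH (F '' (Qm '' S)) := dimH_mono hSsub
    _ ≤ dimH (Qm '' S) := hFlip.dimH_image_le
    _ ≤ dimH (W : Set (EuclideanSpace ℝ (Fin n))) := by
        apply dimH_mono
        rintro t ⟨x, hx, rfl⟩
        exact hQW x
    _ ≤ (n - 1 : ℕ) := hWdim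
  refine ⟨δ, hδpos, vol_zero ?_⟩
  rw [hn]
  calc dimH S ≤ ((n - 1 : ℕ) : ℝ≥0∞) := hSdim
  _ < (n : ℝ≥0∞) := by
      have : (n - 1 : ℕ) < n := by omega
      exact_mod_cast this

lemma vol_pre {n : ℕ} {T : EuclideanSpace ℝ (Fin n) → EuclideanSpace ℝ (Fin n)} {K : ℝ≥0}
    (hT : AntilipschitzWith K T) {s : Set (EuclideanSpace ℝ (Fin n))} (hs : volume s = 0) :
    volume (T ⁻¹' s) = 0 := by
  set k := finrank ℝ (EuclideanSpace ℝ (Fin n)) with hk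
  have h2 : (μH[(k:ℝ)] : Measure (EuclideanSpace ℝ (Fin n))) ≪ volume :=
    MeasureTheory.Measure.absolutelyContinuous_isAddHaarMeasure _ _
  have h3 : μH[(k:ℝ)] s = 0 := h2 hs
  have h4 : μH[(k:ℝ)] (T ⁻¹' s) = 0 := by
    have := hT.hausdorffMeasure_preimage_le (Nat.cast_nonneg k) s
    rw [h3, mul_zero] at this
    exact le_antisymm this zero_le
  exact (MeasureTheory.Measure.absolutelyContinuous_isAddHaarMeasure _ _) h4

lemma grad_inner {n : ℕ} {f : EuclideanSpace ℝ (Fin n) → ℝ} (x w : EuclideanSpace ℝ (Fin n)) :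
    inner (𝕜 := ℝ) (gradient f x) w = fderiv ℝ f x w :=
  InnerProductSpace.toDual_symm_apply

lemma hess_apply {n : ℕ} {f : EuclideanSpace ℝ (Fin n) → ℝ} (hf : ContDiff ℝ 2 f) (θs u w : EuclideanSpace ℝ (Fin n)) :
    inner (𝕜 := ℝ) w (fderiv ℝ (gradient f) θs u) = fderiv ℝ (fderiv ℝ f) θs u w := by
  have h1 : ContDiff ℝ 1 (fderiv ℝ f) := hf.fderiv_right (by norm_num)
  set f'' := fderiv ℝ (fderiv ℝ f) θs with hf''
  have hd : HasFDerivAt (fderiv ℝ f) f'' θs := (h1.differentiable one_ne_zero θs).hasFDerivAt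
  have hGd : DifferentiableAt ℝ (gradient f) θs := (contDiff_grad hf).differentiable one_ne_zero θs
  set HG := fderiv ℝ (gradient f) θs with hHG
  have e1 : HasFDerivAt (fun x => (innerSL ℝ w) (gradient f x)) ((innerSL ℝ w).comp HG) θs :=
    ((innerSL ℝ w).hasFDerivAt).comp θs hGd.hasFDerivAt
  have e2 : (fun x => (innerSL ℝ w) (gradient f x)) = fun x => fderiv ℝ f x w := by
    funext x
    show inner (𝕜 := ℝ) w (gradient f x) = fderiv ℝ f x w
    rw [real_inner_comm]; exact grad_inner x w
  rw [e2] at e1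
  have e3 : HasFDerivAt (fun x => fderiv ℝ f x w) (f''.flip w) θs := by
    have := hd.clm_apply (hasFDerivAt_const w θs)
    simpa using this
  have e4 := e1.unique e3
  have := congrFun (congrArg (fun (L : EuclideanSpace ℝ (Fin n) →L[ℝ] ℝ) => (L : EuclideanSpace ℝ (Fin n) → ℝ)) e4) u
  simpa using this

lemma hess_symm {n : ℕ} {f : EuclideanSpace ℝ (Fin n) → ℝ} (hf : ContDiff ℝ 2 f) (θs u w : EuclideanSpace ℝ (Fin n)) :
    inner (𝕜 := ℝ) (fderiv ℝ (gradient f) θs u) w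
      = inner (𝕜 := ℝ) u (fderiv ℝ (gradient f) θs w) := by
  have h1 : ContDiff ℝ 1 (fderiv ℝ f) := hf.fderiv_right (by norm_num)
  have hd : HasFDerivAt (fderiv ℝ f) (fderiv ℝ (fderiv ℝ f) θs) θs :=
    (h1.differentiable one_ne_zero θs).hasFDerivAt
  have hsym := second_derivative_symmetric
    (f' := fderiv ℝ f) (fun y => (hf.differentiable (by norm_num) y).hasFDerivAt) hd u w
  rw [real_inner_comm]
  rw [hess_apply hf θs u w, hess_apply hf θs w u]
  exact hsym


/-- Theorem 1 (Lee et al.): gradient descent with step size `0 < α < 1/ρ` on a `C²` function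
with `ρ`-Lipschitz gradient converges to a strict saddle `θs` only from a set of initial
points of Lebesgue measure zero. -/
theorem stmt_1 {n : ℕ} (f : EuclideanSpace ℝ (Fin n) → ℝ)
    (hf : ContDiff ℝ 2 f) (ρ : ℝ) (hρ : 0 < ρ)
    (hlip : ∀ x y, ‖gradient f x - gradient f y‖ ≤ ρ * ‖x - y‖)
    (α : ℝ) (hα₀ : 0 < α) (hα₁ : α < 1 / ρ)
    (θs : EuclideanSpace ℝ (Fin n))
    (hsaddle : ∃ v : EuclideanSpace ℝ (Fin n), v ≠ 0 ∧
      inner (𝕜 := ℝ) (fderiv ℝ (gradient f) θs v) v < 0) :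
    volume {θ₀ : EuclideanSpace ℝ (Fin n) |
      Tendsto (fun k => (fun θ => θ - α • gradient f θ)^[k] θ₀) atTop (nhds θs)} = 0 := by
  obtain ⟨δ, hδ, hvol⟩ := stable_null f hf ρ hρ hlip α hα₀ hα₁ θs
    (fun u w => hess_symm hf θs u w) hsaddle
  set g : EuclideanSpace ℝ (Fin n) → EuclideanSpace ℝ (Fin n) :=
    fun θ => θ - α • gradient f θ with hg
  set S : Set (EuclideanSpace ℝ (Fin n)) := {x | ∀ k, g^[k] x ∈ closedBall θs δ} with hS
  have hαρ : α * ρ < 1 := by rw [lt_div_iff₀ hρ] at hα₁; linarith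
  have hpos : (0:ℝ) < 1 - α * ρ := by linarith
  set K : ℝ≥0 := Real.toNNReal (1 - α * ρ)⁻¹ with hK
  have hKcoe : (K : ℝ) = (1 - α * ρ)⁻¹ := Real.coe_toNNReal _ (by positivity)
  have hanti : AntilipschitzWith K g := by
    apply AntilipschitzWith.of_le_mul_dist
    intro x y
    rw [dist_eq_norm, dist_eq_norm, hKcoe]
    have h1 : ‖x - y‖ ≤ ‖g x - g y‖ + α * ρ * ‖x - y‖ := by
      have e1 : x - y = (g x - g y) + α • (gradient f x - gradient f y) := by
        show x - y = ((x - α • gradient f x) - (y - α • gradient f y))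
          + α • (gradient f x - gradient f y)
        module
      calc ‖x - y‖ = ‖(g x - g y) + α • (gradient f x - gradient f y)‖ := by rw [← e1]
      _ ≤ ‖g x - g y‖ + ‖α • (gradient f x - gradient f y)‖ := norm_add_le _ _
      _ ≤ ‖g x - g y‖ + α * ρ * ‖x - y‖ := by
          apply add_le_add le_rfl
          rw [norm_smul, Real.norm_eq_abs, abs_of_pos hα₀]
          calc α * ‖gradient f x - gradient f y‖ ≤ α * (ρ * ‖x - y‖) :=
            mul_le_mul_of_nonneg_left (hlip x y) hα₀.le
          _ = α * ρ * ‖x - y‖ := by ring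
    rw [inv_mul_eq_div, le_div_iff₀ hpos]
    linarith
  have hanti_k : ∀ k : ℕ, AntilipschitzWith (K^k) (g^[k]) := by
    intro k
    induction k with
    | zero =>
      simp only [Function.iterate_zero, pow_zero]
      exact AntilipschitzWith.id
    | succ k ih =>
      rw [Function.iterate_succ']
      have h := hanti.comp ih
      rwa [← pow_succ] at h
  have hsub : {θ₀ : EuclideanSpace ℝ (Fin n) |
      Tendsto (fun k => g^[k] θ₀) atTop (nhds θs)} ⊆ ⋃ N : ℕ, g^[N] ⁻¹' S := by
    intro θ₀ hθ₀
    have hev : {k : ℕ | g^[k] θ₀ ∈ closedBall θs δ} ∈ atTop :=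
      hθ₀ (closedBall_mem_nhds θs hδ)
    obtain ⟨N, hN⟩ := eventually_atTop.mp hev
    refine mem_iUnion.mpr ⟨N, ?_⟩
    intro k
    rw [← Function.iterate_add_apply]
    exact hN (k + N) (Nat.le_add_left N k)
  exact measure_mono_null hsub (measure_iUnion_null fun N => vol_pre (hanti_k N) hvol)
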